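/- For c ∈ ℝ define I(c) = N(c)/D(c) where N(c) = ∫₀^π e^{c cos²θ} (2c(cos²θ − sin²θ) − c² sin²θ cos²θ) sinθ dθ and D(c) = ∫₀^π e^{c cos²θ} sinθ dθ. Then I(c) = −(2c/3) + (2c²/9) + o(c²) as c → 0. In particular, there exists δ > 0 such that I(c) < 0 for all c ∈ (0, δ). -/

import Mathlib

open MeasureTheory Real Asymptotics

/-- The Rayleigh–Ritz quotient I(c) = N(c)/D(c) of the counterexample of
Lemma `counter`. -/
noncomputable def Iq (c : ℝ) : ℝ :=
  (∫ θ in (0:ℝ)..π, Real.exp (c * Real.cos θ ^ 2) *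
      (2 * c * (Real.cos θ ^ 2 - Real.sin θ ^ 2)
        - c ^ 2 * Real.sin θ ^ 2 * Real.cos θ ^ 2) * Real.sin θ) /
  (∫ θ in (0:ℝ)..π, Real.exp (c * Real.cos θ ^ 2) * Real.sin θ)

/-- Taylor bound for the exponential to second order. -/
lemma Iq.exp_taylor {x : ℝ} (hx : |x| ≤ 1) :
    |Real.exp x - (1 + x + x^2/2)| ≤ 2/9 * |x|^3 := by
  have h := Real.exp_bound hx (by norm_num : 0 < 3)
  norm_num [Finset.sum_range_succ, Nat.factorial] at h
  calc |Real.exp x - (1 + x + x^2/2)| ≤ |x|^3 * (4/18) := by convert h using 2 <;> norm_num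
  _ = 2/9 * |x|^3 := by ring

/-- The combined integral has an elementary antiderivative. -/
lemma Iq.comb_integral (c : ℝ) :
    (∫ θ in (0:ℝ)..π, Real.exp (c * Real.cos θ ^ 2) *
      (2 * c * (Real.cos θ ^ 2 - Real.sin θ ^ 2)
        - c ^ 2 * Real.sin θ ^ 2 * Real.cos θ ^ 2 + (5/4 + 3*c/2)) * Real.sin θ)
    = 5/2 * Real.exp c := by
  have key : ∀ θ : ℝ, HasDerivAt
      (fun θ : ℝ => -(Real.exp (c * Real.cos θ ^ 2) *
        (c/2 * Real.cos θ ^ 3 + (5/4 - c/2) * Real.cos θ)))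
      (Real.exp (c * Real.cos θ ^ 2) *
      (2 * c * (Real.cos θ ^ 2 - Real.sin θ ^ 2)
        - c ^ 2 * Real.sin θ ^ 2 * Real.cos θ ^ 2 + (5/4 + 3*c/2)) * Real.sin θ) θ := by
    intro θ
    have hcos : HasDerivAt Real.cos (-Real.sin θ) θ := Real.hasDerivAt_cos θ
    have h1 : HasDerivAt (fun θ : ℝ => c * Real.cos θ ^ 2)
        (c * (2 * Real.cos θ ^ 1 * (-Real.sin θ))) θ := (hcos.pow 2).const_mul c
    have h2 : HasDerivAt (fun θ : ℝ => c/2 * Real.cos θ ^ 3 + (5/4 - c/2) * Real.cos θ)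
        (c/2 * (3 * Real.cos θ ^ 2 * (-Real.sin θ)) + (5/4 - c/2) * (-Real.sin θ)) θ :=
      ((hcos.pow 3).const_mul (c/2)).add (hcos.const_mul (5/4 - c/2))
    have h3 := (h1.exp.mul h2).neg
    exact h3.congr_deriv (by rw [Real.sin_sq θ]; ring)
  rw [intervalIntegral.integral_eq_sub_of_hasDerivAt (fun θ _ => key θ)
    ((Continuous.intervalIntegrable (by fun_prop) 0 π))]
  simp [Real.cos_pi]
  ring

/-- The numerator in closed form via the denominator. -/
lemma Iq.num_eq (c : ℝ) :
    (∫ θ in (0:ℝ)..π, Real.exp (c * Real.cos θ ^ 2) *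
      (2 * c * (Real.cos θ ^ 2 - Real.sin θ ^ 2)
        - c ^ 2 * Real.sin θ ^ 2 * Real.cos θ ^ 2) * Real.sin θ)
    = 5/2 * Real.exp c
      - (5/4 + 3*c/2) * (∫ θ in (0:ℝ)..π, Real.exp (c * Real.cos θ ^ 2) * Real.sin θ) := by
  have hcomb := Iq.comb_integral c
  have hsplit : (∫ θ in (0:ℝ)..π, Real.exp (c * Real.cos θ ^ 2) *
      (2 * c * (Real.cos θ ^ 2 - Real.sin θ ^ 2)
        - c ^ 2 * Real.sin θ ^ 2 * Real.cos θ ^ 2 + (5/4 + 3*c/2)) * Real.sin θ)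
      = (∫ θ in (0:ℝ)..π, Real.exp (c * Real.cos θ ^ 2) *
          (2 * c * (Real.cos θ ^ 2 - Real.sin θ ^ 2)
            - c ^ 2 * Real.sin θ ^ 2 * Real.cos θ ^ 2) * Real.sin θ)
        + (5/4 + 3*c/2) * (∫ θ in (0:ℝ)..π, Real.exp (c * Real.cos θ ^ 2) * Real.sin θ) := by
    rw [← intervalIntegral.integral_const_mul,
      ← intervalIntegral.integral_add (Continuous.intervalIntegrable (by fun_prop) 0 π)
        (Continuous.intervalIntegrable (by fun_prop) 0 π)]
    apply intervalIntegral.integral_congr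
    intro θ _
    ring
  linarith [hcomb, hsplit]

/-- Exact value of the second-order polynomial approximation of the denominator. -/
lemma Iq.polyD (c : ℝ) :
    (∫ θ in (0:ℝ)..π, (1 + c * Real.cos θ ^ 2 + c^2/2 * Real.cos θ ^ 4) * Real.sin θ)
    = 2 + 2*c/3 + c^2/5 := by
  have key : ∀ θ : ℝ, HasDerivAt
      (fun θ : ℝ => -(Real.cos θ + c * Real.cos θ ^ 3 / 3 + c^2 * Real.cos θ ^ 5 / 10))
      ((1 + c * Real.cos θ ^ 2 + c^2/2 * Real.cos θ ^ 4) * Real.sin θ) θ := by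
    intro θ
    have hcos : HasDerivAt Real.cos (-Real.sin θ) θ := Real.hasDerivAt_cos θ
    have h := ((hcos.add (((hcos.pow 3).const_mul c).div_const 3)).add
      (((hcos.pow 5).const_mul (c^2)).div_const 10)).neg
    exact h.congr_deriv (by ring)
  rw [intervalIntegral.integral_eq_sub_of_hasDerivAt (fun θ _ => key θ)
    ((Continuous.intervalIntegrable (by fun_prop) 0 π))]
  simp [Real.cos_pi]
  ring

/-- Lower bound for the denominator. -/
lemma Iq.Dlb {c : ℝ} (hc : |c| ≤ 1) :
    2 / Real.exp 1 ≤ ∫ θ in (0:ℝ)..π, Real.exp (c * Real.cos θ ^ 2) * Real.sin θ := by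
  have h2 : (∫ θ in (0:ℝ)..π, Real.exp (-1) * Real.sin θ) = 2 / Real.exp 1 := by
    rw [intervalIntegral.integral_const_mul, integral_sin]
    simp [Real.cos_pi, Real.exp_neg]
    ring
  rw [← h2]
  apply intervalIntegral.integral_mono_on Real.pi_nonneg
    (Continuous.intervalIntegrable (by fun_prop) 0 π)
    (Continuous.intervalIntegrable (by fun_prop) 0 π)
  intro θ hθ
  have hsin : 0 ≤ Real.sin θ := Real.sin_nonneg_of_nonneg_of_le_pi hθ.1 hθ.2
  apply mul_le_mul_of_nonneg_right _ hsin
  apply Real.exp_le_exp.2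
  have : |c * Real.cos θ ^ 2| ≤ 1 := by
    have h1 : Real.cos θ ^ 2 ≤ 1 := Real.cos_sq_le_one θ
    have h2 : (0:ℝ) ≤ Real.cos θ ^ 2 := sq_nonneg _
    calc |c * Real.cos θ ^ 2| = |c| * Real.cos θ ^ 2 := by rw [abs_mul, abs_of_nonneg h2]
    _ ≤ 1 * 1 := by apply mul_le_mul hc h1 h2 zero_le_one
    _ = 1 := one_mul 1
  linarith [abs_le.1 this |>.1]

/-- Second-order approximation of the denominator. -/
lemma Iq.Dapprox {c : ℝ} (hc : |c| ≤ 1) :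
    |(∫ θ in (0:ℝ)..π, Real.exp (c * Real.cos θ ^ 2) * Real.sin θ) - (2 + 2*c/3 + c^2/5)|
      ≤ |c|^3 := by
  have hsub : (∫ θ in (0:ℝ)..π, Real.exp (c * Real.cos θ ^ 2) * Real.sin θ)
        - (2 + 2*c/3 + c^2/5)
      = ∫ θ in (0:ℝ)..π, (Real.exp (c * Real.cos θ ^ 2)
          - (1 + c * Real.cos θ ^ 2 + c^2/2 * Real.cos θ ^ 4)) * Real.sin θ := by
    rw [← Iq.polyD c]
    rw [← intervalIntegral.integral_sub (Continuous.intervalIntegrable (by fun_prop) 0 π)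
      (Continuous.intervalIntegrable (by fun_prop) 0 π)]
    congr 1; funext θ; ring
  rw [hsub]
  have hbound : ∀ θ ∈ Set.uIoc (0:ℝ) π,
      ‖(Real.exp (c * Real.cos θ ^ 2)
          - (1 + c * Real.cos θ ^ 2 + c^2/2 * Real.cos θ ^ 4)) * Real.sin θ‖
        ≤ 2/9 * |c|^3 := by
    intro θ _
    set x := c * Real.cos θ ^ 2 with hx
    have hcs : Real.cos θ ^ 2 ≤ 1 := Real.cos_sq_le_one θ
    have hcs0 : (0:ℝ) ≤ Real.cos θ ^ 2 := sq_nonneg _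
    have hxabs : |x| ≤ |c| := by
      rw [hx, abs_mul, abs_of_nonneg hcs0]
      calc |c| * Real.cos θ ^ 2 ≤ |c| * 1 := mul_le_mul_of_nonneg_left hcs (abs_nonneg c)
      _ = |c| := mul_one _
    have hx1 : |x| ≤ 1 := hxabs.trans hc
    have het := Iq.exp_taylor hx1
    have heq : (1 + c * Real.cos θ ^ 2 + c^2/2 * Real.cos θ ^ 4) = 1 + x + x^2/2 := by
      rw [hx]; ring
    rw [norm_mul, heq]
    calc |Real.exp x - (1 + x + x^2/2)| * ‖Real.sin θ‖
        ≤ (2/9 * |x|^3) * 1 := by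
          apply mul_le_mul het _ (norm_nonneg _) (by positivity)
          exact Real.abs_sin_le_one θ
    _ = 2/9 * |x|^3 := mul_one _
    _ ≤ 2/9 * |c|^3 := by
          apply mul_le_mul_of_nonneg_left _ (by norm_num)
          exact pow_le_pow_left₀ (abs_nonneg x) hxabs 3
  calc |∫ θ in (0:ℝ)..π, (Real.exp (c * Real.cos θ ^ 2)
          - (1 + c * Real.cos θ ^ 2 + c^2/2 * Real.cos θ ^ 4)) * Real.sin θ|
      ≤ 2/9 * |c|^3 * |π - 0| :=
        intervalIntegral.norm_integral_le_of_norm_le_const hbound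
  _ ≤ |c|^3 := by
      rw [sub_zero, abs_of_nonneg Real.pi_nonneg]
      nlinarith [Real.pi_le_four, abs_nonneg c, pow_nonneg (abs_nonneg c) 3]

/-- Main quantitative estimate: third-order error bound for I(c). -/
lemma Iq.main_est {c : ℝ} (hc : |c| ≤ 1) :
    |Iq c - (-(2 * c / 3) + 2 * c ^ 2 / 9)| ≤ 10 * |c|^3 := by
  unfold Iq
  set D := ∫ θ in (0:ℝ)..π, Real.exp (c * Real.cos θ ^ 2) * Real.sin θ with hDdef
  set N := ∫ θ in (0:ℝ)..π, Real.exp (c * Real.cos θ ^ 2) *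
      (2 * c * (Real.cos θ ^ 2 - Real.sin θ ^ 2)
        - c ^ 2 * Real.sin θ ^ 2 * Real.cos θ ^ 2) * Real.sin θ with hNdef
  have hDlb : 2 / Real.exp 1 ≤ D := Iq.Dlb hc
  have hDpos : 0 < D := lt_of_lt_of_le (by positivity) hDlb
  have hN : N = 5/2 * Real.exp c - (5/4 + 3*c/2) * D := Iq.num_eq c
  have hquot : N / D - (-(2 * c / 3) + 2 * c ^ 2 / 9)
      = (N - (-(2 * c / 3) + 2 * c ^ 2 / 9) * D) / D := by
    field_simp
  -- decompose the numerator
  have hdecomp : N - (-(2 * c / 3) + 2 * c ^ 2 / 9) * D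
      = 5/2 * (Real.exp c - (1 + c + c^2/2))
        - (5/4 + 5*c/6 + 2*c^2/9) * (D - (2 + 2*c/3 + c^2/5))
        + (-(17/54) * c^3 - (2/45) * c^4) := by
    rw [hN]; ring
  have h1 : |5/2 * (Real.exp c - (1 + c + c^2/2))| ≤ 5/9 * |c|^3 := by
    rw [abs_mul]
    have := Iq.exp_taylor hc
    rw [abs_of_nonneg (by norm_num : (0:ℝ) ≤ 5/2)]
    nlinarith [this]
  have hq : |(5/4 + 5*c/6 + 2*c^2/9)| ≤ 3 := by
    rw [abs_le]
    constructor <;> nlinarith [abs_le.1 hc |>.1, abs_le.1 hc |>.2, sq_nonneg c]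
  have h2 : |(5/4 + 5*c/6 + 2*c^2/9) * (D - (2 + 2*c/3 + c^2/5))| ≤ 3 * |c|^3 := by
    rw [abs_mul]
    have hD3 := Iq.Dapprox hc
    apply mul_le_mul hq hD3 (abs_nonneg _) (by norm_num)
  have h3 : |(-(17/54) * c^3 - (2/45) * c^4)| ≤ 2/5 * |c|^3 := by
    have hc3 : |c^3| = |c|^3 := abs_pow c 3
    have hc4 : |c^4| = |c|^4 := abs_pow c 4
    have hle : |c|^4 ≤ |c|^3 := by
      calc |c|^4 = |c|^3 * |c| := by ring
      _ ≤ |c|^3 * 1 := mul_le_mul_of_nonneg_left hc (by positivity)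
      _ = |c|^3 := mul_one _
    calc |(-(17/54) * c^3 - (2/45) * c^4)| ≤ |(17/54) * c^3| + |(2/45) * c^4| := by
          rw [← abs_neg]
          calc |(-(-(17/54) * c^3 - (2/45) * c^4))| = |(17/54) * c^3 + (2/45) * c^4| := by
                ring_nf
          _ ≤ |(17/54) * c^3| + |(2/45) * c^4| := abs_add_le _ _
    _ = 17/54 * |c|^3 + 2/45 * |c|^4 := by
          rw [abs_mul, abs_mul, hc3, hc4,
            show |(17:ℝ)/54| = 17/54 by norm_num, show |(2:ℝ)/45| = 2/45 by norm_num]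
    _ ≤ 2/5 * |c|^3 := by linarith [hle, pow_nonneg (abs_nonneg c) 3]
  have hnum : |N - (-(2 * c / 3) + 2 * c ^ 2 / 9) * D| ≤ 4 * |c|^3 := by
    rw [hdecomp]
    calc |5/2 * (Real.exp c - (1 + c + c^2/2))
        - (5/4 + 5*c/6 + 2*c^2/9) * (D - (2 + 2*c/3 + c^2/5))
        + (-(17/54) * c^3 - (2/45) * c^4)|
        ≤ |5/2 * (Real.exp c - (1 + c + c^2/2))
            - (5/4 + 5*c/6 + 2*c^2/9) * (D - (2 + 2*c/3 + c^2/5))|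
          + |(-(17/54) * c^3 - (2/45) * c^4)| := abs_add_le _ _
    _ ≤ (|5/2 * (Real.exp c - (1 + c + c^2/2))|
          + |(5/4 + 5*c/6 + 2*c^2/9) * (D - (2 + 2*c/3 + c^2/5))|)
          + |(-(17/54) * c^3 - (2/45) * c^4)| := by
          gcongr
          exact abs_sub _ _
    _ ≤ (5/9 * |c|^3 + 3 * |c|^3) + 2/5 * |c|^3 := by gcongr
    _ ≤ 4 * |c|^3 := by nlinarith [pow_nonneg (abs_nonneg c) 3]
  have hexp1 : Real.exp 1 < 3 := by
    have := Real.exp_one_lt_d9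
    linarith
  have hden : (0:ℝ) < 2 / Real.exp 1 := by positivity
  calc |N / D - (-(2 * c / 3) + 2 * c ^ 2 / 9)|
      = |N - (-(2 * c / 3) + 2 * c ^ 2 / 9) * D| / D := by
        rw [hquot, abs_div, abs_of_pos hDpos]
  _ ≤ (4 * |c|^3) / (2 / Real.exp 1) :=
        div_le_div₀ (by positivity) hnum hden hDlb
  _ = 2 * Real.exp 1 * |c|^3 := by
        field_simp; ring
  _ ≤ 10 * |c|^3 := by nlinarith [pow_nonneg (abs_nonneg c) 3, Real.exp_pos 1]

/-- I(c) = −2c/3 + 2c²/9 + o(c²) as c → 0, and hence I(c) < 0 for all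
sufficiently small positive c. -/
theorem stmt_5 :
    (fun c => Iq c - (-(2 * c / 3) + 2 * c ^ 2 / 9)) =o[nhds (0:ℝ)] (fun c => c ^ 2) ∧
    ∃ δ > (0:ℝ), ∀ c ∈ Set.Ioo (0:ℝ) δ, Iq c < 0 := by
  constructor
  · rw [isLittleO_iff]
    intro ε hε
    have hmem : Metric.ball (0:ℝ) (min 1 (ε / 10)) ∈ nhds (0:ℝ) :=
      Metric.ball_mem_nhds 0 (by positivity)
    filter_upwards [hmem] with c hcball
    rw [Metric.mem_ball, Real.dist_eq, sub_zero] at hcball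
    have hc1 : |c| ≤ 1 := le_of_lt (lt_of_lt_of_le hcball (min_le_left _ _))
    have hc2 : |c| < ε / 10 := lt_of_lt_of_le hcball (min_le_right _ _)
    have hest := Iq.main_est hc1
    calc ‖Iq c - (-(2 * c / 3) + 2 * c ^ 2 / 9)‖ ≤ 10 * |c|^3 := hest
    _ = 10 * |c| * |c|^2 := by ring
    _ ≤ 10 * (ε / 10) * |c|^2 := by
        apply mul_le_mul_of_nonneg_right _ (by positivity)
        nlinarith [abs_nonneg c]
    _ = ε * ‖c ^ 2‖ := by
        rw [norm_pow, Real.norm_eq_abs]; ring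
  · refine ⟨1/20, by norm_num, fun c hc => ?_⟩
    obtain ⟨hc0, hc20⟩ := hc
    have hcabs : |c| = c := abs_of_pos hc0
    have hc1 : |c| ≤ 1 := by rw [hcabs]; linarith
    have hest := Iq.main_est hc1
    rw [hcabs] at hest
    have hub : Iq c ≤ -(2 * c / 3) + 2 * c ^ 2 / 9 + 10 * c^3 := by
      have := abs_le.1 hest |>.2
      linarith
    have : -(2 * c / 3) + 2 * c ^ 2 / 9 + 10 * c^3 < 0 := by nlinarith
    linarith
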